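/- arXiv:math-ph/0301007 — 5 statements merged into one kernel-verified Lean document; each statement's English description precedes it below -/
import Mathlib

section
/- Let E, F be orthogonal projections on an infinite-dimensional complex Hilbert space H, both of the same finite rank N, with E∧F = 0 (the ranges of E and F have no nonzero common vector) and Tr[(E − F)²] < 2. Then for every unit vector e in the range of E one has F·P_e ≠ 0 (equivalently Fe ≠ 0), and for every unit vector f in the range of F one has E·P_f ≠ 0 (equivalently Ef ≠ 0). -/
open scoped InnerProductSpace

variable {H : Type*} [NormedAddCommGroup H] [InnerProductSpace ℂ H] [CompleteSpace H]

/-- The trace of a bounded operator on a Hilbert space, computed along a Hilbert basis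
(for trace-class — in particular finite-rank — operators this is the usual,
basis-independent, trace `Tr`). -/
noncomputable def traceAlong {ι : Type*} (b : HilbertBasis ι ℂ H) (A : H →L[ℂ] H) : ℂ :=
  ∑' i, (inner ℂ (b i) (A (b i)) : ℂ)

/-- The absolute value `|A| := √(A⋆A)` of a bounded operator, via the continuous
functional calculus. -/
noncomputable def absCLM (A : H →L[ℂ] H) : H →L[ℂ] H := CFC.sqrt (star A * A)

/-- The Hilbert–Schmidt norm `‖A‖₂ := √(Tr(A⋆A))`, computed along a Hilbert basis. -/
noncomputable def hsNormAlong {ι : Type*} (b : HilbertBasis ι ℂ H) (A : H →L[ℂ] H) : ℝ :=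
  Real.sqrt (traceAlong b (star A * A)).re

/-- The trace norm `‖A‖₁ := Tr|A|`, computed along a Hilbert basis. -/
noncomputable def trNormAlong {ι : Type*} (b : HilbertBasis ι ℂ H) (A : H →L[ℂ] H) : ℝ :=
  (traceAlong b (absCLM A)).re

/-- An orthogonal projection: a bounded idempotent self-adjoint operator. -/
def IsOrthogonalProjection {H : Type*} [NormedAddCommGroup H] [InnerProductSpace ℂ H]
    [CompleteSpace H] (E : H →L[ℂ] H) : Prop :=
  IsSelfAdjoint E ∧ E * E = E

section KeyLemma
set_option linter.unusedSectionVars false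

lemma inner_mul_inner_self' (x y : H) :
    (inner ℂ x y : ℂ) * inner ℂ y x = ((‖(inner ℂ y x : ℂ)‖ ^ 2 : ℝ) : ℂ) := by
  rw [← inner_conj_symm x y, RCLike.conj_mul]
  norm_cast

lemma bessel_hasSum {ι : Type*} (b : HilbertBasis ι ℂ H) (x : H) :
    HasSum (fun i => ‖(inner ℂ (b i) x : ℂ)‖ ^ 2) (‖x‖ ^ 2) := by
  have h := b.hasSum_inner_mul_inner x x
  simp only [inner_mul_inner_self'] at h
  rw [inner_self_eq_norm_sq_to_K] at h
  norm_cast at h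
  exact Complex.hasSum_ofReal.mp h

lemma parseval_sub {U : Submodule ℂ H} [FiniteDimensional ℂ U] {y : H} (hy : y ∈ U) :
    ‖y‖ ^ 2 = ∑ k, ‖(inner ℂ ((stdOrthonormalBasis ℂ U) k : H) y : ℂ)‖ ^ 2 := by
  set o := stdOrthonormalBasis ℂ U
  have h := o.sum_inner_mul_inner (⟨y, hy⟩ : U) (⟨y, hy⟩ : U)
  simp only [inner_mul_inner_self'] at h
  rw [inner_self_eq_norm_sq_to_K] at h
  norm_cast at h
  have h2 : ∑ k, ‖(inner ℂ (o k) (⟨y, hy⟩ : U) : ℂ)‖ ^ 2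
      = ∑ k, ‖(inner ℂ ((o k : H)) y : ℂ)‖ ^ 2 := by
    refine Finset.sum_congr rfl fun k _ => ?_
    rw [Submodule.coe_inner]
  have h3 := Complex.ofReal_injective h
  rw [h2] at h3
  have hnn : ‖(⟨y, hy⟩ : U)‖ = ‖y‖ := rfl
  rw [hnn] at h3
  exact h3.symm

lemma key_lemma {ι : Type*} (b : HilbertBasis ι ℂ H) (E F : H →L[ℂ] H)
    (hE : IsOrthogonalProjection E) (hF : IsOrthogonalProjection F)
    (hEfd : FiniteDimensional ℂ (LinearMap.range (E : H →ₗ[ℂ] H)))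
    (hFfd : FiniteDimensional ℂ (LinearMap.range (F : H →ₗ[ℂ] H)))
    (hrank : Module.finrank ℂ (LinearMap.range (E : H →ₗ[ℂ] H))
      = Module.finrank ℂ (LinearMap.range (F : H →ₗ[ℂ] H)))
    {e : H} (he : e ∈ LinearMap.range (E : H →ₗ[ℂ] H)) (hne : ‖e‖ = 1) (hFe : F e = 0) :
    2 ≤ (traceAlong b ((E - F) * (E - F))).re := by
  set V := LinearMap.range (E : H →ₗ[ℂ] H) with hV
  set W := LinearMap.range (F : H →ₗ[ℂ] H) with hW
  have hEsym := hE.1.isSymmetric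
  have hFsym := hF.1.isSymmetric
  have hEid : ∀ x ∈ V, E x = x := by
    rintro x ⟨y, rfl⟩
    have := congrArg (fun (A : H →L[ℂ] H) => A y) hE.2
    simpa using this
  have hFid : ∀ x ∈ W, F x = x := by
    rintro x ⟨y, rfl⟩
    have := congrArg (fun (A : H →L[ℂ] H) => A y) hF.2
    simpa using this
  have hEe : E e = e := hEid e he
  -- find a unit vector f in ran F with E f = 0
  have hexists : ∃ w : H, w ∈ W ∧ w ≠ 0 ∧ E w = 0 := by
    by_contra hcon
    push_neg at hcon
    set ψ : W →ₗ[ℂ] V :=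
      (E : H →ₗ[ℂ] H).restrict (fun x _ => LinearMap.mem_range_self _ x) with hψ
    have hinj : Function.Injective ψ := by
      intro w₁ w₂ hww
      have h0 : E ((w₁ : H) - w₂) = 0 := by
        have := congrArg (Subtype.val) hww
        simp only [hψ, LinearMap.restrict_apply] at this
        simp only [map_sub]
        simpa [sub_eq_zero] using this
      have hmem : ((w₁ : H) - w₂) ∈ W := Submodule.sub_mem _ w₁.2 w₂.2
      by_contra hne12
      exact (hcon _ hmem (fun h => hne12 (Subtype.ext (sub_eq_zero.mp h)))) h0
    have hsurj : Function.Surjective ψ :=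
      (LinearMap.injective_iff_surjective_of_finrank_eq_finrank hrank.symm).mp hinj
    obtain ⟨⟨w, hw⟩, hww⟩ := hsurj ⟨e, he⟩
    have hEw : E w = e := congrArg Subtype.val hww
    have h1 : (inner ℂ e e : ℂ) = 0 := by
      calc (inner ℂ e e : ℂ) = inner ℂ e (E w) := by rw [hEw]
        _ = inner ℂ (E e) w := (hEsym e w).symm
        _ = inner ℂ e w := by rw [hEe]
        _ = inner ℂ e (F w) := by rw [hFid w hw]
        _ = inner ℂ (F e) w := (hFsym e w).symm
        _ = 0 := by rw [hFe, inner_zero_left]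
    rw [inner_self_eq_norm_sq_to_K, hne] at h1
    norm_num at h1
  obtain ⟨w, hwW, hw0, hEw0⟩ := hexists
  set f : H := (‖w‖ : ℂ)⁻¹ • w with hfdef
  have hnw : ‖w‖ ≠ 0 := norm_ne_zero_iff.mpr hw0
  have hnf : ‖f‖ = 1 := by
    rw [hfdef, norm_smul, norm_inv, Complex.norm_real, norm_norm, inv_mul_cancel₀ hnw]
  have hEf : E f = 0 := by rw [hfdef, map_smul, hEw0, smul_zero]
  have hFf : F f = f := by rw [hfdef, map_smul, hFid w hwW]
  set T := E - F with hT
  have hTsym : ((T : H →L[ℂ] H) : H →ₗ[ℂ] H).IsSymmetric := (hE.1.sub hF.1).isSymmetric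
  have hTs : ∀ x y : H, (inner ℂ (T x) y : ℂ) = inner ℂ x (T y) := fun x y => hTsym x y
  have hTe : T e = e := by
    simp [hT, ContinuousLinearMap.sub_apply, hFe, hEe]
  have hTf : T f = -f := by
    simp [hT, ContinuousLinearMap.sub_apply, hEf, hFf]
  have hef : (inner ℂ e f : ℂ) = 0 := by
    calc (inner ℂ e f : ℂ) = inner ℂ (E e) f := by rw [hEe]
      _ = inner ℂ e (E f) := hEsym e f
      _ = 0 := by rw [hEf, inner_zero_right]
  have hfe : (inner ℂ f e : ℂ) = 0 := by
    rw [← inner_conj_symm f e, hef, map_zero]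
  have hv : Orthonormal ℂ (![e, f]) := by
    rw [orthonormal_iff_ite]
    intro i j
    fin_cases i <;> fin_cases j <;>
      simp [inner_self_eq_norm_sq_to_K, hne, hnf, hef, hfe]
  -- pointwise Bessel bound
  have hpt : ∀ i, ‖(inner ℂ e (T (b i)) : ℂ)‖ ^ 2 + ‖(inner ℂ f (T (b i)) : ℂ)‖ ^ 2
      ≤ ‖T (b i)‖ ^ 2 := by
    intro i
    have h := hv.sum_inner_products_le (T (b i)) (s := Finset.univ)
    simpa [Fin.sum_univ_two] using h
  -- the two unit contributions
  have hS1 : HasSum (fun i => ‖(inner ℂ e (T (b i)) : ℂ)‖ ^ 2) 1 := by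
    have h := bessel_hasSum b (T e)
    have hval : ‖T e‖ ^ 2 = 1 := by rw [hTe, hne, one_pow]
    rw [hval] at h
    have hfun : (fun i => ‖(inner ℂ e (T (b i)) : ℂ)‖ ^ 2)
        = fun i => ‖(inner ℂ (b i) (T e) : ℂ)‖ ^ 2 := by
      funext i
      rw [show (inner ℂ e (T (b i)) : ℂ) = inner ℂ (T e) (b i) from (hTsym e (b i)).symm,
        norm_inner_symm]
    rw [hfun]
    exact h
  have hS2 : HasSum (fun i => ‖(inner ℂ f (T (b i)) : ℂ)‖ ^ 2) 1 := by
    have h := bessel_hasSum b (T f)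
    have hval : ‖T f‖ ^ 2 = 1 := by rw [hTf, norm_neg, hnf, one_pow]
    rw [hval] at h
    have hfun : (fun i => ‖(inner ℂ f (T (b i)) : ℂ)‖ ^ 2)
        = fun i => ‖(inner ℂ (b i) (T f) : ℂ)‖ ^ 2 := by
      funext i
      rw [show (inner ℂ f (T (b i)) : ℂ) = inner ℂ (T f) (b i) from (hTsym f (b i)).symm,
        norm_inner_symm]
    rw [hfun]
    exact h
  -- summability of the full series
  set U := V ⊔ W with hU
  haveI : FiniteDimensional ℂ U := Submodule.finiteDimensional_sup V W
  set o := stdOrthonormalBasis ℂ U with ho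
  have hTU : ∀ x : H, T x ∈ U := fun x => by
    have hx : T x = E x - F x := rfl
    rw [hx]
    exact Submodule.sub_mem _ (Submodule.mem_sup_left ⟨x, rfl⟩)
      (Submodule.mem_sup_right ⟨x, rfl⟩)
  have hg : Summable (fun i => ‖T (b i)‖ ^ 2) := by
    have hfun : (fun i => ‖T (b i)‖ ^ 2)
        = fun i => ∑ k, ‖(inner ℂ ((o k : H)) (T (b i)) : ℂ)‖ ^ 2 :=
      funext fun i => parseval_sub (hTU (b i))
    rw [hfun]
    refine summable_sum fun k _ => ?_
    have hfun2 : (fun i => ‖(inner ℂ ((o k : H)) (T (b i)) : ℂ)‖ ^ 2)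
        = fun i => ‖(inner ℂ (b i) (T (o k : H)) : ℂ)‖ ^ 2 := by
      funext i
      rw [show (inner ℂ ((o k : H)) (T (b i)) : ℂ) = inner ℂ (T (o k : H)) (b i) from
        (hTsym (o k : H) (b i)).symm, norm_inner_symm]
    rw [hfun2]
    exact (bessel_hasSum b _).summable
  -- trace identity
  have htrace : (traceAlong b (T * T)).re = ∑' i, ‖T (b i)‖ ^ 2 := by
    have hfun : (fun i => (inner ℂ (b i) ((T * T) (b i)) : ℂ))
        = fun i => ((‖T (b i)‖ ^ 2 : ℝ) : ℂ) := by
      funext i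
      rw [ContinuousLinearMap.mul_apply, ← hTs (b i) (T (b i)),
        inner_self_eq_norm_sq_to_K]
      norm_cast
    rw [traceAlong, hfun, ← Complex.ofReal_tsum, Complex.ofReal_re]
  rw [htrace]
  have h12 : HasSum (fun i => ‖(inner ℂ e (T (b i)) : ℂ)‖ ^ 2
      + ‖(inner ℂ f (T (b i)) : ℂ)‖ ^ 2) 2 := by
    have h := hS1.add hS2
    norm_num at h
    exact h
  calc (2 : ℝ) = ∑' i, (‖(inner ℂ e (T (b i)) : ℂ)‖ ^ 2 + ‖(inner ℂ f (T (b i)) : ℂ)‖ ^ 2) :=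
        h12.tsum_eq.symm
    _ ≤ ∑' i, ‖T (b i)‖ ^ 2 := Summable.tsum_le_tsum hpt h12.summable hg

end KeyLemma

/-- Let `E, F` be orthogonal projections of the same finite rank `N` on an
infinite-dimensional complex Hilbert space, with `E ∧ F = 0` (no nonzero common vectors of the
ranges) and `Tr[(E − F)²] < 2`.  Then `F e ≠ 0` for every unit vector `e ∈ ran E`
(equivalently `F ⬝ P_e ≠ 0`), and `E f ≠ 0` for every unit vector `f ∈ ran F`. -/
theorem statement2 {H : Type*} [NormedAddCommGroup H] [InnerProductSpace ℂ H] [CompleteSpace H]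
    (hinf : ¬FiniteDimensional ℂ H) {ι : Type*} (b : HilbertBasis ι ℂ H) (N : ℕ)
    (E F : H →L[ℂ] H) (hE : IsOrthogonalProjection E) (hF : IsOrthogonalProjection F)
    (hEfd : FiniteDimensional ℂ (LinearMap.range (E : H →ₗ[ℂ] H)))
    (hFfd : FiniteDimensional ℂ (LinearMap.range (F : H →ₗ[ℂ] H)))
    (hEr : Module.finrank ℂ (LinearMap.range (E : H →ₗ[ℂ] H)) = N)
    (hFr : Module.finrank ℂ (LinearMap.range (F : H →ₗ[ℂ] H)) = N)
    (hmeet : LinearMap.range (E : H →ₗ[ℂ] H) ⊓ LinearMap.range (F : H →ₗ[ℂ] H) = ⊥)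
    (htr : (traceAlong b ((E - F) * (E - F))).re < 2) :
    (∀ e ∈ LinearMap.range (E : H →ₗ[ℂ] H), ‖e‖ = 1 → F e ≠ 0) ∧
      (∀ f ∈ LinearMap.range (F : H →ₗ[ℂ] H), ‖f‖ = 1 → E f ≠ 0) := by
  constructor
  · intro e he hne hFe
    have h := key_lemma b E F hE hF hEfd hFfd (hEr.trans hFr.symm) he hne hFe
    linarith
  · intro f hf hnf hEf
    have h := key_lemma b F E hF hE hFfd hEfd (hFr.trans hEr.symm) hf hnf hEf
    have heq : (F - E) * (F - E) = (E - F) * (E - F) := by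
      rw [← neg_sub E F, neg_mul_neg]
    rw [heq] at h
    linarith
end

section
/- Let E, F be orthogonal projections on an infinite-dimensional complex Hilbert space H, both of the same finite rank N, with E∧F = 0 and Tr[(E − F)²] < 2. Then there exists an orthonormal basis {e_1, …, e_N} of the range of E such that, setting f_j := Fe_j/‖Fe_j‖ (these vectors are well defined since Fe_j ≠ 0), the vectors {f_1, …, f_N} form an orthonormal basis of the range of F satisfying ⟨f_j, e_k⟩ = 0 for all j ≠ k and ⟨f_j, e_j⟩ ≠ 0 for all j; equivalently, P_{f_j}(E − P_{e_j}) = 0 and P_{e_j}(F − P_{f_j}) = 0 for all j. Moreover, for this basis {e_j}, the system {f_j} with these properties is unique up to multiplication of each f_j by a nonzero complex scalar of modulus one. -/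
open scoped InnerProductSpace

variable {H : Type*} [NormedAddCommGroup H] [InnerProductSpace ℂ H] [CompleteSpace H]

section Aux
variable {H : Type*} [NormedAddCommGroup H] [InnerProductSpace ℂ H] [CompleteSpace H]

local notation "⟪" x ", " y "⟫" => @inner ℂ _ _ x y

set_option linter.unusedSectionVars false

lemma op_fix {E : H →L[ℂ] H} (hE : E * E = E) {x : H}
    (hx : x ∈ LinearMap.range (E : H →ₗ[ℂ] H)) : E x = x := by
  obtain ⟨y, rfl⟩ := hx
  have h := congrArg (fun A : H →L[ℂ] H => A y) hE
  simpa using h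

lemma op_adj {E : H →L[ℂ] H} (hE : IsSelfAdjoint E) (x y : H) :
    ⟪E x, y⟫ = ⟪x, E y⟫ := by
  conv_lhs => rw [← ContinuousLinearMap.isSelfAdjoint_iff'.mp hE]
  exact ContinuousLinearMap.adjoint_inner_left E y x

lemma op_norm_le {F : H →L[ℂ] H} (hFsa : IsSelfAdjoint F) (hFi : F * F = F) (x : H) :
    ‖F x‖ ≤ ‖x‖ := by
  have hFF : F (F x) = F x := op_fix hFi ⟨x, rfl⟩
  have h1 : ⟪F x, F x⟫ = ⟪x, F x⟫ := by
    rw [op_adj hFsa, hFF]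
  have h2 : (‖F x‖ : ℂ) ^ 2 = ⟪x, F x⟫ := by
    rw [← h1, inner_self_eq_norm_sq_to_K]
    norm_cast
  have h3 : ‖F x‖ ^ 2 ≤ ‖x‖ * ‖F x‖ := by
    calc ‖F x‖ ^ 2 = ‖(‖F x‖ : ℂ) ^ 2‖ := by
          simp [norm_pow]
      _ = ‖⟪x, F x⟫‖ := by rw [h2]
      _ ≤ ‖x‖ * ‖F x‖ := norm_inner_le_norm x (F x)
  nlinarith [norm_nonneg (F x), norm_nonneg x]

lemma proj_sum_repr {E : H →L[ℂ] H} (hEsa : IsSelfAdjoint E) (hEi : E * E = E) {n : ℕ}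
    (v : OrthonormalBasis (Fin n) ℂ (LinearMap.range (E : H →ₗ[ℂ] H))) (x : H) :
    E x = ∑ j, ⟪(v j : H), x⟫ • (v j : H) := by
  have hmem : E x ∈ LinearMap.range (E : H →ₗ[ℂ] H) := ⟨x, rfl⟩
  have hrepr := v.sum_repr ⟨E x, hmem⟩
  have hco := congrArg (Subtype.val) hrepr
  have hco' : (∑ i : Fin n, ((v.repr ⟨E x, hmem⟩ i • v i : _) : H)) = E x := by
    rw [← Submodule.coe_sum]; exact hco
  rw [← hco']
  refine Finset.sum_congr rfl fun j _ => ?_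
  rw [Submodule.coe_smul]
  congr 1
  rw [v.repr_apply_apply, Submodule.coe_inner]
  have : E ((v j : H)) = (v j : H) := op_fix hEi (v j).2
  calc ⟪(v j : H), E x⟫ = ⟪E (v j : H), x⟫ := by rw [op_adj hEsa]
    _ = ⟪(v j : H), x⟫ := by rw [this]

lemma hasSum_trace_rankOne {ι : Type*} (b : HilbertBasis ι ℂ H) {n : ℕ} (w u : Fin n → H)
    (A : H → H) (hA : ∀ x, A x = ∑ j, ⟪w j, x⟫ • u j) :
    HasSum (fun i => ⟪(b i : H), A (b i)⟫) (∑ j, ⟪w j, u j⟫) := by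
  have h : (fun i => ⟪(b i : H), A (b i)⟫) =
      fun i => ∑ j, ⟪w j, (b i : H)⟫ * ⟪(b i : H), u j⟫ := by
    funext i
    rw [hA, inner_sum]
    exact Finset.sum_congr rfl fun j _ => by rw [inner_smul_right]
  rw [h]
  exact hasSum_sum fun j _ => b.hasSum_inner_mul_inner (w j) (u j)

lemma orth_in_span {n : ℕ} (f : Fin n → H) {x : H} (hx : x ∈ Submodule.span ℂ (Set.range f))
    (h : ∀ k, ⟪f k, x⟫ = 0) : x = 0 := by
  have key : ∀ y ∈ Submodule.span ℂ (Set.range f), ⟪y, x⟫ = 0 := by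
    intro y hy
    induction hy using Submodule.span_induction with
    | mem y hy => obtain ⟨k, rfl⟩ := hy; exact h k
    | zero => simp
    | add y z _ _ hy hz => rw [inner_add_left, hy, hz, add_zero]
    | smul c y _ hy => rw [inner_smul_left, hy, mul_zero]
  exact inner_self_eq_zero.mp (key x hx)

end Aux

/-- Under the hypotheses of Lemma 2.4 (`E, F` orthogonal projections of the same
finite rank `N` on an infinite-dimensional complex Hilbert space, `E ∧ F = 0`,
`Tr[(E − F)²] < 2`), there is an orthonormal basis `{e_1, …, e_N}` of `ran E` such that the
normalized projections `f_j := F e_j / ‖F e_j‖` form an orthonormal basis of `ran F` with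
`⟪f_j, e_k⟫ = 0` for `j ≠ k` and `⟪f_j, e_j⟫ ≠ 0`; moreover, for this basis `{e_j}` the system
`{f_j}` with these properties is unique up to multiplication of each `f_j` by a scalar of
modulus one. -/
theorem statement3 {H : Type*} [NormedAddCommGroup H] [InnerProductSpace ℂ H] [CompleteSpace H]
    (hinf : ¬FiniteDimensional ℂ H) {ι : Type*} (b : HilbertBasis ι ℂ H) (N : ℕ)
    (E F : H →L[ℂ] H) (hE : IsOrthogonalProjection E) (hF : IsOrthogonalProjection F)
    (hEfd : FiniteDimensional ℂ (LinearMap.range (E : H →ₗ[ℂ] H)))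
    (hFfd : FiniteDimensional ℂ (LinearMap.range (F : H →ₗ[ℂ] H)))
    (hEr : Module.finrank ℂ (LinearMap.range (E : H →ₗ[ℂ] H)) = N)
    (hFr : Module.finrank ℂ (LinearMap.range (F : H →ₗ[ℂ] H)) = N)
    (hmeet : LinearMap.range (E : H →ₗ[ℂ] H) ⊓ LinearMap.range (F : H →ₗ[ℂ] H) = ⊥)
    (htr : (traceAlong b ((E - F) * (E - F))).re < 2) :
    ∃ e f : Fin N → H,
      Orthonormal ℂ e ∧ (∀ j, e j ∈ LinearMap.range (E : H →ₗ[ℂ] H)) ∧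
      Submodule.span ℂ (Set.range e) = LinearMap.range (E : H →ₗ[ℂ] H) ∧
      (∀ j, F (e j) ≠ 0) ∧ (∀ j, f j = ‖F (e j)‖⁻¹ • F (e j)) ∧
      Orthonormal ℂ f ∧ (∀ j, f j ∈ LinearMap.range (F : H →ₗ[ℂ] H)) ∧
      Submodule.span ℂ (Set.range f) = LinearMap.range (F : H →ₗ[ℂ] H) ∧
      (∀ j k, j ≠ k → (inner ℂ (f j) (e k) : ℂ) = 0) ∧ (∀ j, (inner ℂ (f j) (e j) : ℂ) ≠ 0) ∧
      (∀ g : Fin N → H, Orthonormal ℂ g →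
        (∀ j, g j ∈ LinearMap.range (F : H →ₗ[ℂ] H)) →
        Submodule.span ℂ (Set.range g) = LinearMap.range (F : H →ₗ[ℂ] H) →
        (∀ j k, j ≠ k → (inner ℂ (g j) (e k) : ℂ) = 0) →
        (∀ j, (inner ℂ (g j) (e j) : ℂ) ≠ 0) →
        ∃ c : Fin N → ℂ, ∀ j, ‖c j‖ = 1 ∧ g j = c j • f j) := by
  classical
  obtain ⟨hEsa, hEi⟩ := hE
  obtain ⟨hFsa, hFi⟩ := hF
  haveI := hEfd
  haveI := hFfd
  set V := LinearMap.range (E : H →ₗ[ℂ] H) with hVdef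
  set W := LinearMap.range (F : H →ₗ[ℂ] H) with hWdef
  -- The compression of F to the range of E, as a symmetric operator on V.
  let T : V →ₗ[ℂ] V :=
    { toFun := fun v => ⟨E (F (v : H)), ⟨F (v : H), rfl⟩⟩
      map_add' := fun x y => by ext; simp
      map_smul' := fun c x => by ext; simp }
  have hT : T.IsSymmetric := by
    intro x y
    show (inner ℂ (⟨E (F (x : H)), _⟩ : V) y : ℂ) = inner ℂ x (⟨E (F (y : H)), _⟩ : V)
    rw [Submodule.coe_inner, Submodule.coe_inner]
    calc (inner ℂ (E (F (x : H))) (y : H) : ℂ)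
        = inner ℂ (F (x : H)) (E (y : H)) := op_adj hEsa _ _
      _ = inner ℂ (F (x : H)) ((y : H)) := by rw [op_fix hEi y.2]
      _ = inner ℂ ((x : H)) (F (y : H)) := by rw [← op_adj hFsa]
      _ = inner ℂ (E (x : H)) (F (y : H)) := by rw [op_fix hEi x.2]
      _ = inner ℂ ((x : H)) (E (F (y : H))) := op_adj hEsa _ _
  let v := hT.eigenvectorBasis hEr
  let lam := hT.eigenvalues hEr
  have hTapp : ∀ j, T (v j) = (lam j : ℂ) • v j := hT.apply_eigenvectorBasis hEr
  set e : Fin N → H := fun j => (v j : H) with hedef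
  have hemem : ∀ j, e j ∈ V := fun j => (v j).2
  have heE : ∀ j, E (e j) = e j := fun j => op_fix hEi (v j).2
  have hone : Orthonormal ℂ e := by
    rw [orthonormal_iff_ite]
    intro j k
    have hv := v.orthonormal
    rw [orthonormal_iff_ite] at hv
    rw [hedef]
    rw [← Submodule.coe_inner]
    exact hv j k
  have hdiag : ∀ j k, (inner ℂ (e j) (F (e k)) : ℂ) = if j = k then ((lam k : ℝ) : ℂ) else 0 := by
    intro j k
    have h2 : E (F (e k)) = ((lam k : ℝ) : ℂ) • e k := by
      have := congrArg (Subtype.val) (hTapp k)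
      simpa [T, hedef] using this
    have h1 : (inner ℂ (e j) (F (e k)) : ℂ) = inner ℂ (e j) (E (F (e k))) := by
      conv_lhs => rw [← heE j]
      rw [op_adj hEsa]
    rw [h1, h2, inner_smul_right]
    have hv := orthonormal_iff_ite.mp hone j k
    rw [hv]
    by_cases h : j = k <;> simp [h]
  have hFF : ∀ x, F (F x) = F x := fun x => op_fix hFi ⟨x, rfl⟩
  have hinner_ff : ∀ j k, (inner ℂ (F (e j)) (F (e k)) : ℂ)
      = if j = k then ((lam k : ℝ) : ℂ) else 0 := by
    intro j k
    rw [op_adj hFsa, hFF, hdiag]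
  have hlam : ∀ j, lam j = ‖F (e j)‖ ^ 2 := by
    intro j
    have h1 := hinner_ff j j
    rw [if_pos rfl] at h1
    have h2 : (inner ℂ (F (e j)) (F (e j)) : ℂ) = ((‖F (e j)‖ ^ 2 : ℝ) : ℂ) := by
      rw [inner_self_eq_norm_sq_to_K]; norm_cast
    rw [h2] at h1
    exact_mod_cast h1.symm
  have hlam_nonneg : ∀ j, 0 ≤ lam j := fun j => by rw [hlam]; positivity
  have hlam_le : ∀ j, lam j ≤ 1 := by
    intro j
    rw [hlam]
    have h1 : ‖F (e j)‖ ≤ ‖e j‖ := op_norm_le hFsa hFi (e j)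
    have h2 : ‖e j‖ = 1 := hone.1 j
    nlinarith [norm_nonneg (F (e j))]
  -- trace computation
  let u : OrthonormalBasis (Fin N) ℂ W := (stdOrthonormalBasis ℂ W).reindex (finCongr hFr)
  have hEsum : ∀ x, E x = ∑ j, (inner ℂ (e j) x : ℂ) • e j := fun x => proj_sum_repr hEsa hEi v x
  have hFsum : ∀ x, F x = ∑ j, (inner ℂ ((u j : H)) x : ℂ) • (u j : H) :=
    fun x => proj_sum_repr hFsa hFi u x
  have h1 : HasSum (fun i => (inner ℂ (b i) (E (b i)) : ℂ)) (∑ j, (inner ℂ (e j) (e j) : ℂ)) :=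
    hasSum_trace_rankOne b e e (fun x => E x) hEsum
  have h2 : HasSum (fun i => (inner ℂ (b i) (F (b i)) : ℂ))
      (∑ j, (inner ℂ ((u j : H)) ((u j : H)) : ℂ)) :=
    hasSum_trace_rankOne b _ _ (fun x => F x) hFsum
  have h3 : HasSum (fun i => (inner ℂ (b i) (E (F (b i))) : ℂ))
      (∑ j, (inner ℂ (F (e j)) (e j) : ℂ)) := by
    refine hasSum_trace_rankOne b (fun j => F (e j)) e (fun x => E (F x)) fun x => ?_
    show E (F x) = ∑ j, (inner ℂ (F (e j)) x : ℂ) • e j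
    rw [hEsum (F x)]
    exact Finset.sum_congr rfl fun j _ => by rw [op_adj hFsa]
  have h4 : HasSum (fun i => (inner ℂ (b i) (F (E (b i))) : ℂ))
      (∑ j, (inner ℂ (e j) (F (e j)) : ℂ)) := by
    refine hasSum_trace_rankOne b e (fun j => F (e j)) (fun x => F (E x)) fun x => ?_
    show F (E x) = ∑ j, (inner ℂ (e j) x : ℂ) • F (e j)
    rw [hEsum x, map_sum]
    exact Finset.sum_congr rfl fun j _ => by rw [map_smul]
  have happ : ∀ x : H, ((E - F) * (E - F)) x = E x + F x - E (F x) - F (E x) := by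
    intro x
    have hEE : E (E x) = E x := op_fix hEi ⟨x, rfl⟩
    simp only [ContinuousLinearMap.mul_apply, ContinuousLinearMap.sub_apply, map_sub,
      hEE, hFF]
    abel
  have hsum : HasSum (fun i => (inner ℂ (b i) (((E - F) * (E - F)) (b i)) : ℂ))
      ((∑ j, (inner ℂ (e j) (e j) : ℂ)) + (∑ j, (inner ℂ ((u j : H)) ((u j : H)) : ℂ))
        - (∑ j, (inner ℂ (F (e j)) (e j) : ℂ)) - (∑ j, (inner ℂ (e j) (F (e j)) : ℂ))) := by
    have hfun : (fun i => (inner ℂ (b i) (((E - F) * (E - F)) (b i)) : ℂ))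
        = fun i => (inner ℂ (b i) (E (b i)) : ℂ) + inner ℂ (b i) (F (b i))
            - inner ℂ (b i) (E (F (b i))) - inner ℂ (b i) (F (E (b i))) := by
      funext i
      rw [happ, inner_sub_right, inner_sub_right, inner_add_right]
    rw [hfun]
    exact ((h1.add h2).sub h3).sub h4
  set S : ℝ := ∑ j, lam j with hSdef
  have hsum1 : (∑ j, (inner ℂ (e j) (e j) : ℂ)) = (N : ℂ) := by
    have : ∀ j : Fin N, (inner ℂ (e j) (e j) : ℂ) = 1 := by
      intro j
      have := orthonormal_iff_ite.mp hone j j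
      simpa using this
    rw [Finset.sum_congr rfl fun j _ => this j]; simp
  have hsum2 : (∑ j, (inner ℂ ((u j : H)) ((u j : H)) : ℂ)) = (N : ℂ) := by
    have : ∀ j : Fin N, (inner ℂ ((u j : H)) ((u j : H)) : ℂ) = 1 := by
      intro j
      have hu := u.orthonormal
      rw [orthonormal_iff_ite] at hu
      have := hu j j
      rw [Submodule.coe_inner] at this
      simpa using this
    rw [Finset.sum_congr rfl fun j _ => this j]; simp
  have hsum3 : (∑ j, (inner ℂ (F (e j)) (e j) : ℂ)) = ((S : ℝ) : ℂ) := by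
    rw [hSdef]
    push_cast
    refine Finset.sum_congr rfl fun j _ => ?_
    rw [op_adj hFsa]
    have := hdiag j j
    rw [if_pos rfl] at this
    rw [this]
  have hsum4 : (∑ j, (inner ℂ (e j) (F (e j)) : ℂ)) = ((S : ℝ) : ℂ) := by
    rw [hSdef]
    push_cast
    refine Finset.sum_congr rfl fun j _ => ?_
    have := hdiag j j
    rw [if_pos rfl] at this
    rw [this]
  have htrace : traceAlong b ((E - F) * (E - F)) = (N : ℂ) + N - S - S := by
    rw [traceAlong, hsum.tsum_eq, hsum1, hsum2, hsum3, hsum4]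
  have htrre : (N : ℝ) + N - S - S < 2 := by
    have : (traceAlong b ((E - F) * (E - F))).re = (N : ℝ) + N - S - S := by
      rw [htrace]
      simp
    linarith [htr, this.symm.le]
  have hS_gt : (N : ℝ) - 1 < S := by linarith
  -- positivity of the eigenvalues
  have hlam_pos : ∀ j, 0 < lam j := by
    intro j
    rcases lt_or_eq_of_le (hlam_nonneg j) with h | h
    · exact h
    have hzero : lam j = 0 := h.symm
    have hbound : S ≤ (N : ℝ) - 1 := by
      have hcard : (Finset.univ.erase j).card = N - 1 := by
        rw [Finset.card_erase_of_mem (Finset.mem_univ j), Finset.card_univ, Fintype.card_fin]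
      have hle : ∑ k ∈ Finset.univ.erase j, lam k ≤ ((N - 1 : ℕ) : ℝ) := by
        calc ∑ k ∈ Finset.univ.erase j, lam k ≤ ∑ _k ∈ Finset.univ.erase j, (1 : ℝ) :=
              Finset.sum_le_sum fun k _ => hlam_le k
          _ = ((N - 1 : ℕ) : ℝ) := by rw [Finset.sum_const, hcard]; simp
      have hsplit : S = lam j + ∑ k ∈ Finset.univ.erase j, lam k := by
        rw [hSdef, ← Finset.add_sum_erase _ _ (Finset.mem_univ j)]
      have hNpos : 1 ≤ N := j.pos
      have : ((N - 1 : ℕ) : ℝ) = (N : ℝ) - 1 := by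
        have h := Nat.cast_sub (R := ℝ) hNpos
        simpa using h
      rw [hsplit, hzero, zero_add]
      linarith [hle, this]
    linarith
  have hFnorm_pos : ∀ j, 0 < ‖F (e j)‖ := by
    intro j
    have := hlam_pos j
    rw [hlam j] at this
    nlinarith [norm_nonneg (F (e j))]
  have hFne : ∀ j, F (e j) ≠ 0 := fun j => norm_pos_iff.mp (hFnorm_pos j)
  -- the f system
  set f : Fin N → H := fun j => ‖F (e j)‖⁻¹ • F (e j) with hfdef
  have hfc : ∀ j, f j = ((‖F (e j)‖⁻¹ : ℝ) : ℂ) • F (e j) := by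
    intro j
    show ‖F (e j)‖⁻¹ • F (e j) = ((‖F (e j)‖⁻¹ : ℝ) : ℂ) • F (e j)
    rw [RCLike.real_smul_eq_coe_smul (K := ℂ)]
    rfl
  have hinner_fk : ∀ j k, (inner ℂ (f j) (f k) : ℂ) = if j = k then 1 else 0 := by
    intro j k
    rw [hfc, hfc, inner_smul_left, inner_smul_right, hinner_ff, Complex.conj_ofReal]
    by_cases h : j = k
    · subst h
      rw [if_pos rfl]
      have h0 : (‖F (e j)‖ : ℝ) ≠ 0 := ne_of_gt (hFnorm_pos j)
      rw [hlam j]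
      push_cast
      have hc : ((‖F (e j)‖ : ℝ) : ℂ) ≠ 0 := by exact_mod_cast h0
      rw [if_pos rfl]
      field_simp
    · rw [if_neg h, if_neg h]
      simp
  have hfone : Orthonormal ℂ f := orthonormal_iff_ite.mpr hinner_fk
  have hfmem : ∀ j, f j ∈ W := by
    intro j
    rw [hfc]
    exact W.smul_mem _ ⟨e j, rfl⟩
  have hspan_e : Submodule.span ℂ (Set.range e) = V := by
    have hli := hone.linearIndependent
    have hle : Submodule.span ℂ (Set.range e) ≤ V := by
      rw [Submodule.span_le]
      rintro _ ⟨j, rfl⟩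
      exact hemem j
    refine Submodule.eq_of_le_of_finrank_le hle ?_
    rw [finrank_span_eq_card hli, hEr]
    simp
  have hspan_f : Submodule.span ℂ (Set.range f) = W := by
    have hli := hfone.linearIndependent
    have hle : Submodule.span ℂ (Set.range f) ≤ W := by
      rw [Submodule.span_le]
      rintro _ ⟨j, rfl⟩
      exact hfmem j
    refine Submodule.eq_of_le_of_finrank_le hle ?_
    rw [finrank_span_eq_card hli, hFr]
    simp
  have hfe : ∀ j k, (inner ℂ (f j) (e k) : ℂ)
      = ((‖F (e j)‖⁻¹ : ℝ) : ℂ) * (if j = k then ((lam k : ℝ) : ℂ) else 0) := by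
    intro j k
    rw [hfc, inner_smul_left, Complex.conj_ofReal, op_adj hFsa, hdiag]
  have hfe_ne : ∀ j k, j ≠ k → (inner ℂ (f j) (e k) : ℂ) = 0 := by
    intro j k hjk
    rw [hfe, if_neg hjk, mul_zero]
  have hfe_diag : ∀ j, (inner ℂ (f j) (e j) : ℂ) ≠ 0 := by
    intro j
    rw [hfe, if_pos rfl]
    have h0 : (‖F (e j)‖ : ℝ) ≠ 0 := ne_of_gt (hFnorm_pos j)
    have hl : lam j ≠ 0 := ne_of_gt (hlam_pos j)
    simp only [ne_eq, mul_eq_zero, not_or]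
    constructor
    · exact_mod_cast inv_ne_zero h0
    · exact_mod_cast hl
  have hFe_eq : ∀ k, F (e k) = ((‖F (e k)‖ : ℝ) : ℂ) • f k := by
    intro k
    rw [hfc, smul_smul]
    have h0 : (‖F (e k)‖ : ℝ) ≠ 0 := ne_of_gt (hFnorm_pos k)
    rw [← Complex.ofReal_mul, mul_inv_cancel₀ h0]
    simp
  refine ⟨e, f, hone, hemem, hspan_e, hFne, fun j => rfl, hfone, hfmem, hspan_f,
    hfe_ne, hfe_diag, ?_⟩
  -- uniqueness
  intro g hgone hgmem _hgspan hge _hgd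
  have hgF : ∀ j, F (g j) = g j := fun j => op_fix hFi (hgmem j)
  have hgf0 : ∀ j k, j ≠ k → (inner ℂ (g j) (f k) : ℂ) = 0 := by
    intro j k hjk
    have h1 : (inner ℂ (g j) (e k) : ℂ) = 0 := hge j k hjk
    have h2 : (inner ℂ (g j) (e k) : ℂ) = ((‖F (e k)‖ : ℝ) : ℂ) * inner ℂ (g j) (f k) := by
      calc (inner ℂ (g j) (e k) : ℂ) = inner ℂ (F (g j)) (e k) := by rw [hgF]
        _ = inner ℂ (g j) (F (e k)) := op_adj hFsa _ _
        _ = ((‖F (e k)‖ : ℝ) : ℂ) * inner ℂ (g j) (f k) := by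
            conv_lhs => rw [hFe_eq k]
            rw [inner_smul_right]
    have h0 : ((‖F (e k)‖ : ℝ) : ℂ) ≠ 0 := by
      exact_mod_cast ne_of_gt (hFnorm_pos k)
    rw [h1] at h2
    exact (mul_eq_zero.mp h2.symm).resolve_left h0
  have hfg0 : ∀ j k, j ≠ k → (inner ℂ (f k) (g j) : ℂ) = 0 := by
    intro j k hjk
    rw [← inner_conj_symm, hgf0 j k hjk, map_zero]
  refine ⟨fun j => (inner ℂ (f j) (g j) : ℂ), fun j => ?_⟩
  have hgeq : g j = (inner ℂ (f j) (g j) : ℂ) • f j := by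
    have hx : g j - (inner ℂ (f j) (g j) : ℂ) • f j = 0 := by
      refine orth_in_span f ?_ ?_
      · rw [hspan_f]
        exact Submodule.sub_mem _ (hgmem j) (Submodule.smul_mem _ _ (hspan_f ▸
          Submodule.subset_span ⟨j, rfl⟩))
      · intro k
        rw [inner_sub_right, inner_smul_right]
        by_cases h : k = j
        · subst h
          have := hinner_fk k k
          rw [if_pos rfl] at this
          rw [this, mul_one, sub_self]
        · rw [hfg0 j k (fun hh => h hh.symm)]
          have := hinner_fk k j
          rw [if_neg h] at this
          rw [this, mul_zero, sub_zero]
    have := sub_eq_zero.mp hx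
    exact this
  constructor
  · have hnorm : ‖g j‖ = ‖(inner ℂ (f j) (g j) : ℂ)‖ * ‖f j‖ := by
      conv_lhs => rw [hgeq]
      rw [norm_smul]
    have hfj : ‖f j‖ = 1 := hfone.1 j
    have hgj : ‖g j‖ = 1 := hgone.1 j
    rw [hfj, mul_one] at hnorm
    rw [← hnorm, hgj]
  · exact hgeq
end

section
/- Let E, F be orthogonal projections on an infinite-dimensional complex Hilbert space H, both of the same finite rank N, with E∧F = 0 and Tr[(E − F)²] < 2, and let {e_1, …, e_N} be an orthonormal basis of ran E and {f_1, …, f_N} an orthonormal basis of ran F such that ⟨f_j, e_k⟩ = 0 for j ≠ k and ⟨f_j, e_j⟩ ≠ 0 for all j. Then there exists an orthonormal system {e_1^⊥, …, e_N^⊥} contained in the range of (E∨F) − E and complex numbers α_j, β_j with α_j·β_j ≠ 0 such that f_j = α_j e_j + β_j e_j^⊥ for every j = 1, …, N. -/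
open scoped InnerProductSpace

variable {H : Type*} [NormedAddCommGroup H] [InnerProductSpace ℂ H] [CompleteSpace H]

/-- With `E, F` orthogonal projections of the same finite rank `N` on an
infinite-dimensional complex Hilbert space, `E ∧ F = 0`, `Tr[(E − F)²] < 2`, and orthonormal
bases `{e_j}` of `ran E` and `{f_j}` of `ran F` with `⟪f_j, e_k⟫ = 0` for `j ≠ k` and
`⟪f_j, e_j⟫ ≠ 0`:  there exist an orthonormal system `{e_j^⊥}` in the range of `(E ∨ F) − E`
(i.e. in `(ran E ⊔ ran F) ⊓ (ran E)ᗮ`) and complex scalars `α_j, β_j` with `α_j·β_j ≠ 0` such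
that `f_j = α_j e_j + β_j e_j^⊥` for all `j`. -/
theorem statement4 {H : Type*} [NormedAddCommGroup H] [InnerProductSpace ℂ H] [CompleteSpace H]
    (hinf : ¬FiniteDimensional ℂ H) {ι : Type*} (b : HilbertBasis ι ℂ H) (N : ℕ)
    (E F : H →L[ℂ] H) (hE : IsOrthogonalProjection E) (hF : IsOrthogonalProjection F)
    (hEfd : FiniteDimensional ℂ (LinearMap.range (E : H →ₗ[ℂ] H)))
    (hFfd : FiniteDimensional ℂ (LinearMap.range (F : H →ₗ[ℂ] H)))
    (hEr : Module.finrank ℂ (LinearMap.range (E : H →ₗ[ℂ] H)) = N)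
    (hFr : Module.finrank ℂ (LinearMap.range (F : H →ₗ[ℂ] H)) = N)
    (hmeet : LinearMap.range (E : H →ₗ[ℂ] H) ⊓ LinearMap.range (F : H →ₗ[ℂ] H) = ⊥)
    (htr : (traceAlong b ((E - F) * (E - F))).re < 2)
    (e f : Fin N → H)
    (he : Orthonormal ℂ e) (heE : ∀ j, e j ∈ LinearMap.range (E : H →ₗ[ℂ] H))
    (hespan : Submodule.span ℂ (Set.range e) = LinearMap.range (E : H →ₗ[ℂ] H))
    (hf : Orthonormal ℂ f) (hfF : ∀ j, f j ∈ LinearMap.range (F : H →ₗ[ℂ] H))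
    (hfspan : Submodule.span ℂ (Set.range f) = LinearMap.range (F : H →ₗ[ℂ] H))
    (horth : ∀ j k, j ≠ k → (inner ℂ (f j) (e k) : ℂ) = 0)
    (hdiag : ∀ j, (inner ℂ (f j) (e j) : ℂ) ≠ 0) :
    ∃ (ebot : Fin N → H) (α β : Fin N → ℂ),
      Orthonormal ℂ ebot ∧
      (∀ j, ebot j ∈ (LinearMap.range (E : H →ₗ[ℂ] H) ⊔ LinearMap.range (F : H →ₗ[ℂ] H)) ⊓
        (LinearMap.range (E : H →ₗ[ℂ] H))ᗮ) ∧
      (∀ j, α j * β j ≠ 0) ∧ (∀ j, f j = α j • e j + β j • ebot j) := by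
  classical
  set α : Fin N → ℂ := fun j => (inner ℂ (e j) (f j) : ℂ) with hα
  set w : Fin N → H := fun j => f j - α j • e j with hw
  -- inner products of e with w
  have hew : ∀ k j, (inner ℂ (e k) (w j) : ℂ) = 0 := by
    intro k j
    simp only [hw, inner_sub_right, inner_smul_right]
    rcases eq_or_ne k j with rfl | hkj
    · simp [orthonormal_iff_ite.mp he, hα, he.1 k]
    · have h1 : (inner ℂ (e k) (f j) : ℂ) = 0 := by
        rw [← inner_conj_symm]
        rw [horth j k (Ne.symm hkj)]
        simp
      have h2 : (inner ℂ (e k) (e j) : ℂ) = 0 := by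
        have := orthonormal_iff_ite.mp he k j
        simpa [hkj] using this
      simp [h1, h2]
  -- w j is nonzero
  have hwne : ∀ j, w j ≠ 0 := by
    intro j hcon
    have hfj : f j = α j • e j := by
      have := sub_eq_zero.mp hcon
      exact this
    have hmem : f j ∈ LinearMap.range (E : H →ₗ[ℂ] H) ⊓ LinearMap.range (F : H →ₗ[ℂ] H) := by
      refine ⟨?_, hfF j⟩
      rw [hfj]
      exact Submodule.smul_mem _ _ (heE j)
    rw [hmeet] at hmem
    have hfj0 : f j = 0 := hmem
    have := he.ne_zero
    have : ‖f j‖ = 1 := hf.1 j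
    rw [hfj0] at this
    simp at this
  have hwnorm : ∀ j, ‖w j‖ ≠ 0 := fun j => norm_ne_zero_iff.mpr (hwne j)
  -- pairwise orthogonality of w
  have hwo : ∀ j k, j ≠ k → (inner ℂ (w j) (w k) : ℂ) = 0 := by
    intro j k hjk
    simp only [hw, inner_sub_left, inner_sub_right, inner_smul_left, inner_smul_right]
    have hff : (inner ℂ (f j) (f k) : ℂ) = 0 := by
      have := orthonormal_iff_ite.mp hf j k
      simpa [hjk] using this
    have hee : (inner ℂ (e j) (e k) : ℂ) = 0 := by
      have := orthonormal_iff_ite.mp he j k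
      simpa [hjk] using this
    have hfe : (inner ℂ (f j) (e k) : ℂ) = 0 := horth j k hjk
    have hef : (inner ℂ (e j) (f k) : ℂ) = 0 := by
      rw [← inner_conj_symm, horth k j (Ne.symm hjk)]; simp
    simp [hff, hee, hfe, hef]
  refine ⟨fun j => ((‖w j‖ : ℂ))⁻¹ • w j, α, fun j => (‖w j‖ : ℂ), ?_, ?_, ?_, ?_⟩
  · rw [orthonormal_iff_ite]
    intro j k
    rcases eq_or_ne j k with rfl | hjk
    · simp only [if_pos rfl, inner_smul_left, inner_smul_right]
      rw [inner_self_eq_norm_sq_to_K]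
      have h : (‖w j‖ : ℂ) ≠ 0 := by
        exact_mod_cast hwnorm j
      field_simp
      simp only [map_inv₀, Complex.conj_ofReal, if_true, mul_one]
      rw [one_div, map_inv₀, Complex.conj_ofReal, pow_two, ← mul_assoc]
      norm_cast
      have h3 : ‖w j‖⁻¹ * ‖w j‖ * ‖w j‖ = ‖w j‖ := by rw [inv_mul_cancel₀ (hwnorm j), one_mul]
      rw [show (RCLike.ofReal ‖w j‖ : ℂ) = Complex.ofReal ‖w j‖ from rfl]
      exact_mod_cast h3
    · simp only [if_neg hjk, inner_smul_left, inner_smul_right, hwo j k hjk, mul_zero]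
  · intro j
    constructor
    · refine Submodule.smul_mem _ _ ?_
      exact Submodule.sub_mem _ (Submodule.mem_sup_right (hfF j))
        (Submodule.smul_mem _ _ (Submodule.mem_sup_left (heE j)))
    · refine Submodule.smul_mem _ _ ?_
      rw [← hespan, Submodule.mem_orthogonal]
      intro u hu
      induction hu using Submodule.span_induction with
      | mem x hx =>
        obtain ⟨k, rfl⟩ := hx
        exact hew k j
      | zero => simp
      | add x y _ _ hx hy => rw [inner_add_left, hx, hy, add_zero]
      | smul c x _ hx => rw [inner_smul_left, hx, mul_zero]
  · intro j
    apply mul_ne_zero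
    · intro hc
      apply hdiag j
      rw [← inner_conj_symm, show (inner ℂ (e j) (f j) : ℂ) = 0 from hc, map_zero]
    · show (‖w j‖ : ℂ) ≠ 0
      exact_mod_cast hwnorm j
  · intro j
    have h : (‖w j‖ : ℂ) • ((‖w j‖ : ℂ))⁻¹ • w j = w j := by
      rw [smul_smul]
      rw [mul_inv_cancel₀ (by exact_mod_cast hwnorm j : (‖w j‖ : ℂ) ≠ 0)]
      simp
    rw [h, hw]
    module
end

section
/- Let x, y be unit vectors in a complex Hilbert space H. Then the operator norm of the difference of the corresponding rank-one projections is ‖P_x − P_y‖ = √(1 − |⟨x, y⟩|²). -/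
/-- The rank-one orthogonal projection `P_x : z ↦ ⟪x, z⟫ • x` determined by a (unit) vector
`x`. -/
noncomputable def rankOneProj {H : Type*} [NormedAddCommGroup H] [InnerProductSpace ℂ H]
    (x : H) : H →L[ℂ] H :=
  (innerSL ℂ x).smulRight x

open scoped ComplexConjugate

lemma rankOneProj_apply {H : Type*} [NormedAddCommGroup H] [InnerProductSpace ℂ H]
    (x z : H) : rankOneProj x z = (inner ℂ x z : ℂ) • x := rfl

lemma rankOneProj_isSelfAdjoint {H : Type*} [NormedAddCommGroup H] [InnerProductSpace ℂ H]
    [CompleteSpace H] (x : H) : IsSelfAdjoint (rankOneProj x) := by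
  rw [ContinuousLinearMap.isSelfAdjoint_iff_isSymmetric]
  intro u v
  simp only [ContinuousLinearMap.coe_coe, rankOneProj_apply, inner_smul_left, inner_smul_right]
  rw [← inner_conj_symm x u, mul_comm]
  simp

/-- For unit vectors `x, y` in a complex Hilbert space,
`‖P_x − P_y‖ = √(1 − |⟪x, y⟫|²)`. -/
theorem statement11 {H : Type*} [NormedAddCommGroup H] [InnerProductSpace ℂ H] [CompleteSpace H]
    (x y : H) (hx : ‖x‖ = 1) (hy : ‖y‖ = 1) :
    ‖rankOneProj x - rankOneProj y‖ = Real.sqrt (1 - ‖(inner ℂ x y : ℂ)‖ ^ 2) := by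
  set c : ℂ := inner ℂ x y with hc
  set r : ℝ := 1 - ‖c‖ ^ 2 with hr
  have hx0 : x ≠ 0 := fun h => by simp [h] at hx
  have hy0 : y ≠ 0 := fun h => by simp [h] at hy
  have hxx : (inner ℂ x x : ℂ) = 1 := by
    rw [inner_self_eq_norm_sq_to_K, hx]; norm_num
  have hyy : (inner ℂ y y : ℂ) = 1 := by
    rw [inner_self_eq_norm_sq_to_K, hy]; norm_num
  have hyx : (inner ℂ y x : ℂ) = conj c := by rw [hc, inner_conj_symm]
  have hcle : ‖c‖ ≤ 1 := by
    have := norm_inner_le_norm (𝕜 := ℂ) x y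
    rw [hx, hy] at this
    simpa using this
  have hrnn : 0 ≤ r := by
    rw [hr]
    nlinarith [norm_nonneg c]
  set T : H →L[ℂ] H := rankOneProj x - rankOneProj y with hT
  by_cases hr0 : r = 0
  · -- degenerate case: ‖c‖ = 1, so y is a unit multiple of x and T = 0
    have hcnorm : ‖c‖ = 1 := by
      have : ‖c‖ ^ 2 = 1 := by rw [hr] at hr0; linarith
      nlinarith [norm_nonneg c]
    have heq : ‖(inner ℂ x y : ℂ)‖ = ‖x‖ * ‖y‖ := by rw [← hc, hcnorm, hx, hy]; norm_num
    obtain ⟨t, ht0, hty⟩ := (norm_inner_eq_norm_iff hx0 hy0).mp heq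
    have htnorm : ‖t‖ = 1 := by
      have : ‖y‖ = ‖t‖ * ‖x‖ := by rw [hty, norm_smul]
      rw [hx, hy, mul_one] at this; linarith
    have hTz : T = 0 := by
      ext z
      have : (conj t * t : ℂ) = 1 := by
        rw [RCLike.conj_mul, htnorm]
        norm_num
      simp only [hT, ContinuousLinearMap.sub_apply, rankOneProj_apply,
        ContinuousLinearMap.zero_apply, hty, inner_smul_left, smul_smul]
      rw [show ((starRingEnd ℂ) t * inner ℂ x z * t : ℂ) = inner ℂ x z * ((starRingEnd ℂ) t * t) by
        ring, this, mul_one, sub_self]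
    rw [hTz, hr0]
    simp
  · have hrpos : 0 < r := lt_of_le_of_ne hrnn (Ne.symm hr0)
    -- the cube identity T³ = r • T
    have hcube : T ∘L T ∘L T = (r : ℂ) • T := by
      ext z
      simp only [ContinuousLinearMap.coe_comp', Function.comp_apply,
        ContinuousLinearMap.smul_apply, hT, ContinuousLinearMap.sub_apply, rankOneProj_apply,
        inner_sub_right, inner_smul_right, hxx, hyy, hyx, ← hc, smul_sub, smul_smul, sub_smul]
      have hrc : (r : ℂ) = 1 - conj c * c := by
        rw [← Complex.normSq_eq_conj_mul_self, hr, Complex.normSq_eq_norm_sq]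
        push_cast
        ring
      rw [hrc]
      module
    have hTsa : IsSelfAdjoint T :=
      (rankOneProj_isSelfAdjoint x).sub (rankOneProj_isSelfAdjoint y)
    have hT2sa : IsSelfAdjoint (T ∘L T) := by
      rw [ContinuousLinearMap.isSelfAdjoint_iff'] at hTsa ⊢
      rw [ContinuousLinearMap.adjoint_comp, hTsa]
    have hTadj : ContinuousLinearMap.adjoint T = T :=
      ContinuousLinearMap.isSelfAdjoint_iff'.mp hTsa
    have hT2adj : ContinuousLinearMap.adjoint (T ∘L T) = T ∘L T :=
      ContinuousLinearMap.isSelfAdjoint_iff'.mp hT2sa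
    have h1 : ‖T ∘L T‖ = ‖T‖ * ‖T‖ := by
      rw [← ContinuousLinearMap.norm_adjoint_comp_self T, hTadj]
    have h2 : ‖(T ∘L T) ∘L (T ∘L T)‖ = ‖T ∘L T‖ * ‖T ∘L T‖ := by
      rw [← ContinuousLinearMap.norm_adjoint_comp_self (T ∘L T), hT2adj]
    have h4 : (T ∘L T) ∘L (T ∘L T) = (r : ℂ) • (T ∘L T) := by
      calc (T ∘L T) ∘L (T ∘L T) = (T ∘L T ∘L T) ∘L T := by
            ext z; simp
        _ = ((r : ℂ) • T) ∘L T := by rw [hcube]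
        _ = (r : ℂ) • (T ∘L T) := by ext z; simp
    have hT2x : (T ∘L T) x = (r : ℂ) • x := by
      have := congrFun (congrArg DFunLike.coe hcube) x
      simp only [ContinuousLinearMap.coe_comp', Function.comp_apply,
        ContinuousLinearMap.smul_apply] at this
      -- instead compute directly
      simp only [hT, ContinuousLinearMap.coe_comp', Function.comp_apply,
        ContinuousLinearMap.sub_apply, rankOneProj_apply, inner_sub_right, inner_smul_right,
        hxx, hyy, hyx, ← hc, smul_sub, smul_smul, sub_smul]
      have hrc : (r : ℂ) = 1 - conj c * c := by
        rw [← Complex.normSq_eq_conj_mul_self, hr, Complex.normSq_eq_norm_sq]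
        push_cast
        ring
      rw [hrc]
      module
    have hT2ne : T ∘L T ≠ 0 := by
      intro h
      have : (T ∘L T) x = 0 := by rw [h]; rfl
      rw [hT2x] at this
      have h' : r = 0 ∨ x = 0 := by simpa [smul_eq_zero] using this
      exact h'.elim hr0 hx0
    have hnorm4 : ‖(r : ℂ) • (T ∘L T)‖ = r * ‖T ∘L T‖ := by
      rw [norm_smul, Complex.norm_real, Real.norm_of_nonneg hrnn]
    have hT2norm : ‖T ∘L T‖ = r := by
      have hne : ‖T ∘L T‖ ≠ 0 := norm_ne_zero_iff.mpr hT2ne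
      have : ‖T ∘L T‖ * ‖T ∘L T‖ = r * ‖T ∘L T‖ := by rw [← h2, h4, hnorm4]
      exact mul_right_cancel₀ hne this
    have : ‖T‖ * ‖T‖ = r := by rw [← h1, hT2norm]
    rw [← this, Real.sqrt_mul_self (norm_nonneg T)]
end

section
/- Let E, F be orthogonal projections on a complex Hilbert space H, both of the same finite rank N. Set Q := E∧F, E′ := E − Q, F′ := F − Q, E′^⊥ := (E∨F) − E, F′^⊥ := (E∨F) − F, and N′ := N − rank(Q). Then E′∧F′ = 0 and E′^⊥∧F′^⊥ = 0; the projections E′, F′, E′^⊥, F′^⊥ all have rank N′; and Tr[(E − F)²] = Tr[(E′ − F′)²] = Tr[(E′^⊥ − F′^⊥)²] = 2[N − Tr(EF)] = 2[N′ − Tr(E′F′)] = 2[N′ − Tr(E′^⊥F′^⊥)]. -/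
open scoped InnerProductSpace

variable {H : Type*} [NormedAddCommGroup H] [InnerProductSpace ℂ H] [CompleteSpace H]

section Helpers

variable {H : Type*} [NormedAddCommGroup H] [InnerProductSpace ℂ H] [CompleteSpace H]

local notation "⟪" x ", " y "⟫" => @inner ℂ _ _ x y

lemma OPA.mem_range_iff {P : H →L[ℂ] H} (hP : IsOrthogonalProjection P) {x : H} :
    x ∈ LinearMap.range (P : H →ₗ[ℂ] H) ↔ P x = x := by
  constructor
  · rintro ⟨y, rfl⟩
    have := congrArg (fun T : H →L[ℂ] H => T y) hP.2
    simpa using this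
  · intro h; exact ⟨x, h⟩

lemma OPA.comp_eq {P R : H →L[ℂ] H} (hR : IsOrthogonalProjection R)
    (h : LinearMap.range (P : H →ₗ[ℂ] H) ≤ LinearMap.range (R : H →ₗ[ℂ] H)) :
    R * P = P := by
  ext x
  exact (OPA.mem_range_iff hR).1 (h ⟨x, rfl⟩)

lemma OPA.comp_eq' {P R : H →L[ℂ] H} (hP : IsOrthogonalProjection P)
    (hR : IsOrthogonalProjection R)
    (h : LinearMap.range (P : H →ₗ[ℂ] H) ≤ LinearMap.range (R : H →ₗ[ℂ] H)) :
    P * R = P := by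
  have h1 := OPA.comp_eq hR h
  have h2 : star (R * P) = P * R := by rw [star_mul, hP.1.star_eq, hR.1.star_eq]
  rw [← h2, h1, hP.1.star_eq]

lemma OPA.inner_map {P : H →L[ℂ] H} (hP : IsOrthogonalProjection P) (x y : H) :
    ⟪P x, y⟫ = ⟪x, P y⟫ := by
  rw [← ContinuousLinearMap.adjoint_inner_left, ← ContinuousLinearMap.star_eq_adjoint,
    hP.1.star_eq]

lemma OPA.exists_onb {P : H →L[ℂ] H} (hP : IsOrthogonalProjection P)
    [FiniteDimensional ℂ (LinearMap.range (P : H →ₗ[ℂ] H))] :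
    ∃ f : Fin (Module.finrank ℂ (LinearMap.range (P : H →ₗ[ℂ] H))) → H,
      (∀ j, P (f j) = f j) ∧ (∀ j, ⟪f j, f j⟫ = 1) ∧
      (∀ x, P x = ∑ j, ⟪f j, x⟫ • f j) := by
  set S := LinearMap.range (P : H →ₗ[ℂ] H)
  set v := stdOrthonormalBasis ℂ S
  refine ⟨fun j => (v j : H), fun j => (OPA.mem_range_iff hP).1 (v j).2, fun j => ?_, fun x => ?_⟩
  · have h1 : ‖(v j : H)‖ = 1 := v.orthonormal.1 j
    rw [inner_self_eq_norm_sq_to_K, h1]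
    norm_num
  · have hmem : P x ∈ S := ⟨x, rfl⟩
    have hexp := v.sum_repr' (⟨P x, hmem⟩ : S)
    refine Eq.trans (congrArg Subtype.val hexp).symm ?_
    rw [AddSubmonoidClass.coe_finset_sum]
    refine Finset.sum_congr rfl fun j _ => ?_
    rw [Submodule.coe_smul]
    congr 1
    rw [Submodule.coe_inner]
    show ⟪(v j : H), P x⟫ = ⟪(v j : H), x⟫
    rw [← OPA.inner_map hP, (OPA.mem_range_iff hP).1 (v j).2]

lemma OPA.summable_trace {ι : Type*} (b : HilbertBasis ι ℂ H) {n : ℕ} {P : H →L[ℂ] H}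
    {f : Fin n → H} (hPx : ∀ x, P x = ∑ j, ⟪f j, x⟫ • f j) (B : H →L[ℂ] H) :
    Summable (fun i => ⟪b i, (P * B) (b i)⟫) ∧
      ∑' i, ⟪b i, (P * B) (b i)⟫ = ∑ j, ⟪f j, B (f j)⟫ := by
  have hfun : ∀ i, ⟪b i, (P * B) (b i)⟫
      = ∑ j, ⟪(ContinuousLinearMap.adjoint B) (f j), b i⟫ * ⟪b i, f j⟫ := by
    intro i
    rw [ContinuousLinearMap.mul_apply, hPx (B (b i)), inner_sum]
    refine Finset.sum_congr rfl fun j _ => ?_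
    rw [inner_smul_right, ContinuousLinearMap.adjoint_inner_left]
  have hsum : ∀ j : Fin n,
      Summable (fun i => ⟪(ContinuousLinearMap.adjoint B) (f j), b i⟫ * ⟪b i, f j⟫) :=
    fun j => b.summable_inner_mul_inner _ _
  constructor
  · have : (fun i => ⟪b i, (P * B) (b i)⟫)
        = fun i => ∑ j, ⟪(ContinuousLinearMap.adjoint B) (f j), b i⟫ * ⟪b i, f j⟫ :=
      funext hfun
    rw [this]
    exact summable_sum fun j _ => hsum j
  · calc ∑' i, ⟪b i, (P * B) (b i)⟫
        = ∑' i, ∑ j, ⟪(ContinuousLinearMap.adjoint B) (f j), b i⟫ * ⟪b i, f j⟫ := by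
          simp only [hfun]
      _ = ∑ j, ∑' i, ⟪(ContinuousLinearMap.adjoint B) (f j), b i⟫ * ⟪b i, f j⟫ :=
          Summable.tsum_finsetSum fun j _ => hsum j
      _ = ∑ j, ⟪(ContinuousLinearMap.adjoint B) (f j), f j⟫ := by
          refine Finset.sum_congr rfl fun j _ => b.tsum_inner_mul_inner _ _
      _ = ∑ j, ⟪f j, B (f j)⟫ := by
          refine Finset.sum_congr rfl fun j _ => ContinuousLinearMap.adjoint_inner_left _ _ _

lemma OPA.rank_sub {P R : H →L[ℂ] H} (hP : IsOrthogonalProjection P)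
    (hR : IsOrthogonalProjection R)
    (hle : LinearMap.range (P : H →ₗ[ℂ] H) ≤ LinearMap.range (R : H →ₗ[ℂ] H))
    [fd : FiniteDimensional ℂ (LinearMap.range (R : H →ₗ[ℂ] H))] :
    Module.finrank ℂ (LinearMap.range ((R - P) : H →ₗ[ℂ] H)) +
      Module.finrank ℂ (LinearMap.range (P : H →ₗ[ℂ] H)) =
      Module.finrank ℂ (LinearMap.range (R : H →ₗ[ℂ] H)) := by
  have hRP : R * P = P := OPA.comp_eq hR hle
  have hPR : P * R = P := OPA.comp_eq' hP hR hle
  set s := LinearMap.range ((R - P) : H →ₗ[ℂ] H)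
  set t := LinearMap.range (P : H →ₗ[ℂ] H)
  set u := LinearMap.range (R : H →ₗ[ℂ] H)
  have hmem : ∀ x : H, x ∈ s ↔ ∃ a, R a - P a = x := by
    intro x
    constructor
    · rintro ⟨a, ha⟩; exact ⟨a, by simpa using ha⟩
    · rintro ⟨a, ha⟩; exact ⟨a, by simpa using ha⟩
  have hsle : s ≤ u := by
    rintro x hx
    obtain ⟨a, rfl⟩ := (hmem x).1 hx
    refine (OPA.mem_range_iff hR).2 ?_
    have : R (R a) - R (P a) = R a - P a := by
      have h1 : R (R a) = R a := congrArg (fun T : H →L[ℂ] H => T a) hR.2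
      have h2 : R (P a) = P a := congrArg (fun T : H →L[ℂ] H => T a) hRP
      rw [h1, h2]
    simpa using this
  haveI : FiniteDimensional ℂ s := Submodule.finiteDimensional_of_le hsle
  haveI : FiniteDimensional ℂ t := Submodule.finiteDimensional_of_le hle
  have hinf : s ⊓ t = ⊥ := by
    rw [eq_bot_iff]
    rintro x ⟨hx1, hx2⟩
    obtain ⟨a, ha⟩ := (hmem x).1 hx1
    have hPx0 : P x = 0 := by
      rw [← ha, map_sub]
      have h1 : P (R a) = P a := congrArg (fun T : H →L[ℂ] H => T a) hPR
      have h2 : P (P a) = P a := congrArg (fun T : H →L[ℂ] H => T a) hP.2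
      rw [h1, h2, sub_self]
    have := (OPA.mem_range_iff hP).1 hx2
    simp only [Submodule.mem_bot]
    rw [← this, hPx0]
  have hsup : s ⊔ t = u := by
    apply le_antisymm (sup_le hsle hle)
    rintro x hx
    have hRx : R x = x := (OPA.mem_range_iff hR).1 hx
    refine Submodule.mem_sup.2 ⟨R x - P x, (hmem _).2 ⟨x, rfl⟩, P x, ⟨x, rfl⟩, by
      rw [sub_add_cancel, hRx]⟩
  have := Submodule.finrank_sup_add_finrank_inf_eq s t
  rw [hsup, hinf] at this
  simpa using this.symm

end Helpers

/-- Let `E, F` be orthogonal projections of the same finite rank `N` on a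
complex Hilbert space, let `Q := E ∧ F` (the projection onto `ran E ⊓ ran F`) and `G := E ∨ F`
(the projection onto `ran E ⊔ ran F`), and set `E′ := E − Q`, `F′ := F − Q`,
`E′^⊥ := G − E`, `F′^⊥ := G − F` and `N′ := N − rank Q`.  Then `E′ ∧ F′ = 0`,
`E′^⊥ ∧ F′^⊥ = 0`, the projections `E′, F′, E′^⊥, F′^⊥` all have rank `N′`, and
`Tr[(E − F)²] = Tr[(E′ − F′)²] = Tr[(E′^⊥ − F′^⊥)²] = 2[N − Tr(EF)] = 2[N′ − Tr(E′F′)]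
 = 2[N′ − Tr(E′^⊥F′^⊥)]`. -/
theorem statement14 {H : Type*} [NormedAddCommGroup H] [InnerProductSpace ℂ H] [CompleteSpace H]
    {ι : Type*} (b : HilbertBasis ι ℂ H) (N : ℕ)
    (E F Q G : H →L[ℂ] H)
    (hE : IsOrthogonalProjection E) (hF : IsOrthogonalProjection F)
    (hQ : IsOrthogonalProjection Q) (hG : IsOrthogonalProjection G)
    (hEfd : FiniteDimensional ℂ (LinearMap.range (E : H →ₗ[ℂ] H)))
    (hFfd : FiniteDimensional ℂ (LinearMap.range (F : H →ₗ[ℂ] H)))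
    (hEr : Module.finrank ℂ (LinearMap.range (E : H →ₗ[ℂ] H)) = N)
    (hFr : Module.finrank ℂ (LinearMap.range (F : H →ₗ[ℂ] H)) = N)
    (hQr : LinearMap.range (Q : H →ₗ[ℂ] H) =
      LinearMap.range (E : H →ₗ[ℂ] H) ⊓ LinearMap.range (F : H →ₗ[ℂ] H))
    (hGr : LinearMap.range (G : H →ₗ[ℂ] H) =
      LinearMap.range (E : H →ₗ[ℂ] H) ⊔ LinearMap.range (F : H →ₗ[ℂ] H)) :
    (LinearMap.range ((E - Q) : H →ₗ[ℂ] H) ⊓ LinearMap.range ((F - Q) : H →ₗ[ℂ] H) = ⊥) ∧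
    (LinearMap.range ((G - E) : H →ₗ[ℂ] H) ⊓ LinearMap.range ((G - F) : H →ₗ[ℂ] H) = ⊥) ∧
    (Module.finrank ℂ (LinearMap.range ((E - Q) : H →ₗ[ℂ] H)) =
      N - Module.finrank ℂ (LinearMap.range (Q : H →ₗ[ℂ] H))) ∧
    (Module.finrank ℂ (LinearMap.range ((F - Q) : H →ₗ[ℂ] H)) =
      N - Module.finrank ℂ (LinearMap.range (Q : H →ₗ[ℂ] H))) ∧
    (Module.finrank ℂ (LinearMap.range ((G - E) : H →ₗ[ℂ] H)) =
      N - Module.finrank ℂ (LinearMap.range (Q : H →ₗ[ℂ] H))) ∧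
    (Module.finrank ℂ (LinearMap.range ((G - F) : H →ₗ[ℂ] H)) =
      N - Module.finrank ℂ (LinearMap.range (Q : H →ₗ[ℂ] H))) ∧
    (traceAlong b ((E - F) * (E - F)) =
      traceAlong b (((E - Q) - (F - Q)) * ((E - Q) - (F - Q)))) ∧
    (traceAlong b ((E - F) * (E - F)) =
      traceAlong b (((G - E) - (G - F)) * ((G - E) - (G - F)))) ∧
    (traceAlong b ((E - F) * (E - F)) = 2 * ((N : ℂ) - traceAlong b (E * F))) ∧
    (traceAlong b ((E - F) * (E - F)) =
      2 * (((N - Module.finrank ℂ (LinearMap.range (Q : H →ₗ[ℂ] H)) : ℕ) : ℂ) -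
        traceAlong b ((E - Q) * (F - Q)))) ∧
    (traceAlong b ((E - F) * (E - F)) =
      2 * (((N - Module.finrank ℂ (LinearMap.range (Q : H →ₗ[ℂ] H)) : ℕ) : ℂ) -
        traceAlong b ((G - E) * (G - F)))) := by
  classical
  haveI := hEfd; haveI := hFfd
  have hQleE : LinearMap.range (Q : H →ₗ[ℂ] H) ≤ LinearMap.range (E : H →ₗ[ℂ] H) := by
    rw [hQr]; exact inf_le_left
  have hQleF : LinearMap.range (Q : H →ₗ[ℂ] H) ≤ LinearMap.range (F : H →ₗ[ℂ] H) := by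
    rw [hQr]; exact inf_le_right
  have hEleG : LinearMap.range (E : H →ₗ[ℂ] H) ≤ LinearMap.range (G : H →ₗ[ℂ] H) := by
    rw [hGr]; exact le_sup_left
  have hFleG : LinearMap.range (F : H →ₗ[ℂ] H) ≤ LinearMap.range (G : H →ₗ[ℂ] H) := by
    rw [hGr]; exact le_sup_right
  haveI hQfd : FiniteDimensional ℂ (LinearMap.range (Q : H →ₗ[ℂ] H)) :=
    Submodule.finiteDimensional_of_le hQleE
  haveI hGfd : FiniteDimensional ℂ (LinearMap.range (G : H →ₗ[ℂ] H)) := by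
    rw [hGr]; infer_instance
  have hEQ : E * Q = Q := OPA.comp_eq hE hQleE
  have hQE : Q * E = Q := OPA.comp_eq' hQ hE hQleE
  have hFQ : F * Q = Q := OPA.comp_eq hF hQleF
  have hQF : Q * F = Q := OPA.comp_eq' hQ hF hQleF
  have hGE : G * E = E := OPA.comp_eq hG hEleG
  have hEG : E * G = E := OPA.comp_eq' hE hG hEleG
  have hGF : G * F = F := OPA.comp_eq hG hFleG
  have hFG : F * G = F := OPA.comp_eq' hF hG hFleG
  set nQ := Module.finrank ℂ (LinearMap.range (Q : H →ₗ[ℂ] H)) with hnQ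
  set nG := Module.finrank ℂ (LinearMap.range (G : H →ₗ[ℂ] H)) with hnG
  -- rank identities
  have hrkE : Module.finrank ℂ (LinearMap.range ((E - Q) : H →ₗ[ℂ] H)) + nQ = N := by
    have := OPA.rank_sub hQ hE hQleE; rw [hEr] at this; exact this
  have hrkF : Module.finrank ℂ (LinearMap.range ((F - Q) : H →ₗ[ℂ] H)) + nQ = N := by
    have := OPA.rank_sub hQ hF hQleF; rw [hFr] at this; exact this
  have hrkGE : Module.finrank ℂ (LinearMap.range ((G - E) : H →ₗ[ℂ] H)) + N = nG := by
    have := OPA.rank_sub hE hG hEleG; rw [hEr] at this; exact this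
  have hrkGF : Module.finrank ℂ (LinearMap.range ((G - F) : H →ₗ[ℂ] H)) + N = nG := by
    have := OPA.rank_sub hF hG hFleG; rw [hFr] at this; exact this
  have hGQ : nG + nQ = N + N := by
    have := Submodule.finrank_sup_add_finrank_inf_eq (LinearMap.range (E : H →ₗ[ℂ] H))
      (LinearMap.range (F : H →ₗ[ℂ] H))
    rw [← hGr, ← hQr, hEr, hFr] at this; exact this
  have hnQN : nQ ≤ N := by omega
  -- disjointness 1
  have hEmul : E * (E - Q) = E - Q := by rw [mul_sub, hE.2, hEQ]
  have hFmul : F * (F - Q) = F - Q := by rw [mul_sub, hF.2, hFQ]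
  have hQmulE : Q * (E - Q) = 0 := by rw [mul_sub, hQE, hQ.2, sub_self]
  have hQmulF : Q * (F - Q) = 0 := by rw [mul_sub, hQF, hQ.2, sub_self]
  have goal1 : LinearMap.range ((E - Q) : H →ₗ[ℂ] H) ⊓
      LinearMap.range ((F - Q) : H →ₗ[ℂ] H) = ⊥ := by
    rw [eq_bot_iff]
    rintro x ⟨hx1, hx2⟩
    obtain ⟨a, ha⟩ := hx1
    obtain ⟨c, hc⟩ := hx2
    have hax : (E - Q) a = x := ha
    have hcx : (F - Q) c = x := hc
    have hEx : E x = x := by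
      have := congrArg (fun T : H →L[ℂ] H => T a) hEmul
      simp only [ContinuousLinearMap.mul_apply] at this
      rw [← hax]; exact this
    have hFx : F x = x := by
      have := congrArg (fun T : H →L[ℂ] H => T c) hFmul
      simp only [ContinuousLinearMap.mul_apply] at this
      rw [← hcx]; exact this
    have hQx : Q x = 0 := by
      have := congrArg (fun T : H →L[ℂ] H => T a) hQmulE
      simp only [ContinuousLinearMap.mul_apply, ContinuousLinearMap.zero_apply] at this
      rw [← hax]; exact this
    have hxQ : x ∈ LinearMap.range (Q : H →ₗ[ℂ] H) := by
      rw [hQr]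
      exact ⟨(OPA.mem_range_iff hE).2 hEx, (OPA.mem_range_iff hF).2 hFx⟩
    have hx : Q x = x := (OPA.mem_range_iff hQ).1 hxQ
    simp only [Submodule.mem_bot]
    rw [← hx, hQx]
  -- disjointness 2
  have hGmulE : G * (G - E) = G - E := by rw [mul_sub, hG.2, hGE]
  have hGmulF : G * (G - F) = G - F := by rw [mul_sub, hG.2, hGF]
  have hEmul0 : E * (G - E) = 0 := by rw [mul_sub, hEG, hE.2, sub_self]
  have hFmul0 : F * (G - F) = 0 := by rw [mul_sub, hFG, hF.2, sub_self]
  have goal2 : LinearMap.range ((G - E) : H →ₗ[ℂ] H) ⊓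
      LinearMap.range ((G - F) : H →ₗ[ℂ] H) = ⊥ := by
    rw [eq_bot_iff]
    rintro x ⟨hx1, hx2⟩
    obtain ⟨a, ha⟩ := hx1
    obtain ⟨c, hc⟩ := hx2
    have hax : (G - E) a = x := ha
    have hcx : (G - F) c = x := hc
    have hGx : G x = x := by
      have := congrArg (fun T : H →L[ℂ] H => T a) hGmulE
      simp only [ContinuousLinearMap.mul_apply] at this
      rw [← hax]; exact this
    have hEx : E x = 0 := by
      have := congrArg (fun T : H →L[ℂ] H => T a) hEmul0
      simp only [ContinuousLinearMap.mul_apply, ContinuousLinearMap.zero_apply] at this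
      rw [← hax]; exact this
    have hFx : F x = 0 := by
      have := congrArg (fun T : H →L[ℂ] H => T c) hFmul0
      simp only [ContinuousLinearMap.mul_apply, ContinuousLinearMap.zero_apply] at this
      rw [← hcx]; exact this
    have hxG : x ∈ LinearMap.range (G : H →ₗ[ℂ] H) := (OPA.mem_range_iff hG).2 hGx
    rw [hGr] at hxG
    obtain ⟨e, he, f, hf, hef⟩ := Submodule.mem_sup.1 hxG
    have h1 : (inner ℂ x e : ℂ) = 0 := by
      have hee : E e = e := (OPA.mem_range_iff hE).1 he
      rw [← hee, ← OPA.inner_map hE, hEx, inner_zero_left]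
    have h2 : (inner ℂ x f : ℂ) = 0 := by
      have hff : F f = f := (OPA.mem_range_iff hF).1 hf
      rw [← hff, ← OPA.inner_map hF, hFx, inner_zero_left]
    have hxx : (inner ℂ x x : ℂ) = 0 := by
      nth_rewrite 2 [← hef]
      rw [inner_add_right, h1, h2, add_zero]
    simp only [Submodule.mem_bot]
    exact inner_self_eq_zero.1 hxx
  -- trace machinery
  obtain ⟨fE, hfEfix, hfE1, hfEx⟩ := OPA.exists_onb hE
  obtain ⟨fF, hfFfix, hfF1, hfFx⟩ := OPA.exists_onb hF
  obtain ⟨fQ, hfQfix, hfQ1, hfQx⟩ := OPA.exists_onb hQ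
  obtain ⟨fG, hfGfix, hfG1, hfGx⟩ := OPA.exists_onb hG
  set tEF := ∑ j, (inner ℂ (fE j) (F (fE j)) : ℂ) with htEF
  have sEF := OPA.summable_trace b hfEx F
  have sE1F := OPA.summable_trace b hfEx (1 - F)
  have sF1E := OPA.summable_trace b hfFx (1 - E)
  have sQQ := OPA.summable_trace b hfQx Q
  have sGG := OPA.summable_trace b hfGx G
  have sFF := OPA.summable_trace b hfFx F
  have sEE := OPA.summable_trace b hfEx E
  have vQQ : ∑ j, (inner ℂ (fQ j) (Q (fQ j)) : ℂ) = (nQ : ℂ) := by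
    rw [Finset.sum_congr rfl fun j _ => by rw [hfQfix j, hfQ1 j]]
    simp [hnQ]
  have vGG : ∑ j, (inner ℂ (fG j) (G (fG j)) : ℂ) = (nG : ℂ) := by
    rw [Finset.sum_congr rfl fun j _ => by rw [hfGfix j, hfG1 j]]
    simp [hnG]
  have vFF : ∑ j, (inner ℂ (fF j) (F (fF j)) : ℂ) = (N : ℂ) := by
    rw [Finset.sum_congr rfl fun j _ => by rw [hfFfix j, hfF1 j]]
    simp [hFr]
  have vEE : ∑ j, (inner ℂ (fE j) (E (fE j)) : ℂ) = (N : ℂ) := by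
    rw [Finset.sum_congr rfl fun j _ => by rw [hfEfix j, hfE1 j]]
    simp [hEr]
  have hsym : ∑ k, (inner ℂ (fF k) (E (fF k)) : ℂ) = tEF := by
    have h1 : ∀ k, (inner ℂ (fF k) (E (fF k)) : ℂ)
        = ∑ j, (inner ℂ (fE j) (fF k) : ℂ) * (inner ℂ (fF k) (fE j) : ℂ) := by
      intro k
      rw [hfEx (fF k), inner_sum]
      exact Finset.sum_congr rfl fun j _ => by rw [inner_smul_right]
    have h2 : ∀ j, (inner ℂ (fE j) (F (fE j)) : ℂ)
        = ∑ k, (inner ℂ (fF k) (fE j) : ℂ) * (inner ℂ (fE j) (fF k) : ℂ) := by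
      intro j
      rw [hfFx (fE j), inner_sum]
      exact Finset.sum_congr rfl fun k _ => by rw [inner_smul_right]
    rw [Finset.sum_congr rfl fun k _ => h1 k, htEF,
      Finset.sum_congr rfl fun j _ => h2 j, Finset.sum_comm]
    exact Finset.sum_congr rfl fun j _ => Finset.sum_congr rfl fun k _ => mul_comm _ _
  -- the main trace value
  have hexp : (E - F) * (E - F) = E * (1 - F) + F * (1 - E) := by
    simp only [mul_sub, sub_mul, mul_one, hE.2, hF.2]; abel
  have hsplit1 : ∑ j, (inner ℂ (fE j) ((1 - F) (fE j)) : ℂ) = (N : ℂ) - tEF := by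
    have h : ∀ j, (inner ℂ (fE j) ((1 - F) (fE j)) : ℂ) = 1 - (inner ℂ (fE j) (F (fE j)) : ℂ) := by
      intro j
      rw [ContinuousLinearMap.sub_apply, inner_sub_right, ContinuousLinearMap.one_apply, hfE1 j]
    rw [Finset.sum_congr rfl fun j _ => h j, Finset.sum_sub_distrib, htEF]
    simp [hEr]
  have hsplit2 : ∑ k, (inner ℂ (fF k) ((1 - E) (fF k)) : ℂ) = (N : ℂ) - tEF := by
    have h : ∀ k, (inner ℂ (fF k) ((1 - E) (fF k)) : ℂ) = 1 - (inner ℂ (fF k) (E (fF k)) : ℂ) := by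
      intro k
      rw [ContinuousLinearMap.sub_apply, inner_sub_right, ContinuousLinearMap.one_apply, hfF1 k]
    rw [Finset.sum_congr rfl fun k _ => h k, Finset.sum_sub_distrib, hsym]
    simp [hFr]
  have keyEF : traceAlong b ((E - F) * (E - F)) = 2 * ((N : ℂ) - tEF) := by
    show (∑' i, (inner ℂ (b i) (((E - F) * (E - F)) (b i)) : ℂ)) = _
    rw [hexp]
    have h : ∀ i, (inner ℂ (b i) ((E * (1 - F) + F * (1 - E)) (b i)) : ℂ)
        = (inner ℂ (b i) ((E * (1 - F)) (b i)) : ℂ) + (inner ℂ (b i) ((F * (1 - E)) (b i)) : ℂ) := by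
      intro i
      rw [ContinuousLinearMap.add_apply, inner_add_right]
    rw [tsum_congr h, Summable.tsum_add sE1F.1 sF1E.1, sE1F.2, sF1E.2, hsplit1, hsplit2]
    ring
  have trEFval : traceAlong b (E * F) = tEF := sEF.2
  -- trace of (E-Q)*(F-Q)
  have hop : (E - Q) * (F - Q) = E * F - Q * Q := by
    have e1 : (E - Q) * (F - Q) = E * F - E * Q - Q * F + Q * Q := by noncomm_ring
    rw [e1, hEQ, hQF, hQ.2]; abel
  have trEQFQ : traceAlong b ((E - Q) * (F - Q)) = tEF - (nQ : ℂ) := by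
    show (∑' i, (inner ℂ (b i) (((E - Q) * (F - Q)) (b i)) : ℂ)) = _
    rw [hop]
    have h : ∀ i, (inner ℂ (b i) ((E * F - Q * Q) (b i)) : ℂ)
        = (inner ℂ (b i) ((E * F) (b i)) : ℂ) - (inner ℂ (b i) ((Q * Q) (b i)) : ℂ) := by
      intro i
      rw [ContinuousLinearMap.sub_apply, inner_sub_right]
    rw [tsum_congr h, Summable.tsum_sub sEF.1 sQQ.1, sEF.2, sQQ.2, vQQ, htEF]
  -- trace of (G-E)*(G-F)
  have hop2 : (G - E) * (G - F) = G * G - F * F - E * E + E * F := by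
    have e1 : (G - E) * (G - F) = G * G - G * F - E * G + E * F := by noncomm_ring
    rw [e1, hGF, hEG, hF.2, hE.2]
  have trGEGF : traceAlong b ((G - E) * (G - F)) = (nG : ℂ) - N - N + tEF := by
    show (∑' i, (inner ℂ (b i) (((G - E) * (G - F)) (b i)) : ℂ)) = _
    rw [hop2]
    have h : ∀ i, (inner ℂ (b i) ((G * G - F * F - E * E + E * F) (b i)) : ℂ)
        = (((inner ℂ (b i) ((G * G) (b i)) : ℂ) - (inner ℂ (b i) ((F * F) (b i)) : ℂ))
          - (inner ℂ (b i) ((E * E) (b i)) : ℂ)) + (inner ℂ (b i) ((E * F) (b i)) : ℂ) := by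
      intro i
      simp only [ContinuousLinearMap.sub_apply, ContinuousLinearMap.add_apply,
        inner_sub_right, inner_add_right]
    rw [tsum_congr h, Summable.tsum_add ((sGG.1.sub sFF.1).sub sEE.1) sEF.1,
      Summable.tsum_sub (sGG.1.sub sFF.1) sEE.1, Summable.tsum_sub sGG.1 sFF.1,
      sGG.2, sFF.2, sEE.2, sEF.2, vGG, vFF, vEE, htEF]
  have hnGc : (nG : ℂ) = 2 * N - nQ := by
    have : (nG : ℂ) + nQ = N + N := by exact_mod_cast congrArg (Nat.cast : ℕ → ℂ) hGQ
    linear_combination this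
  refine ⟨goal1, goal2, by omega, by omega, by omega, by omega, ?_, ?_, ?_, ?_, ?_⟩
  · have h : (E - Q) - (F - Q) = E - F := by abel
    rw [h]
  · have h : (G - E) - (G - F) = F - E := by abel
    have h2 : (F - E) * (F - E) = (E - F) * (E - F) := by noncomm_ring
    rw [h, h2]
  · rw [keyEF, trEFval]
  · rw [keyEF, trEQFQ, Nat.cast_sub hnQN]
    ring
  · rw [keyEF, trGEGF, Nat.cast_sub hnQN, hnGc]
    ring
end
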